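/- arXiv:2502.00493 — 2 statements merged into one kernel-verified Lean document; each statement's English description precedes it below -/
import Mathlib

section
/- Let H be a complex Hilbert space and let Z be an accretive operator in H with domain dom Z ⊆ H such that the range of Z + I (the map x ↦ Z x + x on dom Z) is all of H. Then: (a) ‖Z x + x‖ ≥ ‖x‖ for all x ∈ dom Z, so Z + I is injective and its inverse (Z + I)⁻¹ is an everywhere-defined bounded operator on H of norm at most 1; (b) there is a unique bounded operator C : H → H (the Cayley transform of Z) satisfying C(Z x + x) = Z x − x for all x ∈ dom Z, and ‖C‖ ≤ 1; (c) the operator C + I is a compact operator on H if and only if dom Z = H and Z is a compact operator on H. -/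
open ContinuousLinearMap in
/-- A fixed point of a contraction on a Hilbert space is a fixed point of its adjoint. -/
private lemma fix_of_contraction' {H : Type*} [NormedAddCommGroup H] [InnerProductSpace ℂ H]
    [CompleteSpace H] (C : H →L[ℂ] H) (hC : ‖C‖ ≤ 1) {u : H} (h : C u = u) :
    ContinuousLinearMap.adjoint C u = u := by
  set w := ContinuousLinearMap.adjoint C u with hw
  have hnorm : ‖ContinuousLinearMap.adjoint C‖ = ‖C‖ :=
    LinearIsometryEquiv.norm_map ContinuousLinearMap.adjoint C
  have h1 : ‖w‖ ≤ ‖u‖ := by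
    calc ‖w‖ ≤ ‖ContinuousLinearMap.adjoint C‖ * ‖u‖ := (ContinuousLinearMap.adjoint C).le_opNorm u
    _ ≤ 1 * ‖u‖ := by rw [hnorm]; exact mul_le_mul_of_nonneg_right hC (norm_nonneg u)
    _ = ‖u‖ := one_mul _
  have h2 : RCLike.re (inner ℂ w u : ℂ) = ‖u‖ ^ 2 := by
    rw [hw, ContinuousLinearMap.adjoint_inner_left, h, inner_self_eq_norm_sq]
  have h3 : ‖w - u‖ ^ 2 = ‖w‖ ^ 2 - 2 * RCLike.re (inner ℂ w u : ℂ) + ‖u‖ ^ 2 :=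
    @norm_sub_sq ℂ _ _ _ _ w u
  have h4 : ‖w - u‖ = 0 := by nlinarith [norm_nonneg (w - u), norm_nonneg w, norm_nonneg u]
  exact sub_eq_zero.mp (norm_eq_zero.mp h4)

/-- Let `Z` be an accretive operator in a complex Hilbert space `H` with
domain `dom ⊆ H` such that the range of `Z + I` is all of `H` (an m-accretive operator).
Then:
(a) `‖Z x + x‖ ≥ ‖x‖` for all `x ∈ dom`, so `Z + I` is injective and its inverse is an
    everywhere-defined bounded operator of norm at most `1`;
(b) there is a unique bounded operator `C : H → H` (the Cayley transform of `Z`) with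
    `C (Z x + x) = Z x - x` for all `x ∈ dom`, and `‖C‖ ≤ 1`;
(c) `C + I` is a compact operator on `H` if and only if `dom = H` and `Z` is a compact
    operator on `H`. -/
theorem stmt_3 {H : Type*} [NormedAddCommGroup H] [InnerProductSpace ℂ H] [CompleteSpace H]
    (dom : Submodule ℂ H) (Z : dom →ₗ[ℂ] H)
    (hacc : ∀ x : dom, 0 ≤ (inner ℂ (x : H) (Z x) : ℂ).re)
    (hsurj : ∀ u : H, ∃ x : dom, Z x + (x : H) = u) :
    -- (a)
    ((∀ x : dom, ‖(x : H)‖ ≤ ‖Z x + (x : H)‖) ∧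
      (∀ x y : dom, Z x + (x : H) = Z y + (y : H) → x = y) ∧
      (∃ R : H →L[ℂ] H, ‖R‖ ≤ 1 ∧ ∀ x : dom, R (Z x + (x : H)) = (x : H))) ∧
    -- (b)
    ((∃ C : H →L[ℂ] H, (∀ x : dom, C (Z x + (x : H)) = Z x - (x : H)) ∧ ‖C‖ ≤ 1 ∧
      (∀ C' : H →L[ℂ] H, (∀ x : dom, C' (Z x + (x : H)) = Z x - (x : H)) → C' = C))) ∧
    -- (c)
    (∀ C : H →L[ℂ] H, (∀ x : dom, C (Z x + (x : H)) = Z x - (x : H)) →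
      (IsCompactOperator ⇑(C + 1) ↔
        (dom = ⊤ ∧ IsCompactOperator fun x : dom => Z x))) := by
  classical
  have hre : ∀ x : dom, 0 ≤ RCLike.re (inner ℂ (Z x) ((x : H)) : ℂ) := by
    intro x; rw [inner_re_symm]; simpa using hacc x
  have a1 : ∀ x : dom, ‖(x : H)‖ ≤ ‖Z x + (x : H)‖ := by
    intro x
    have h := @norm_add_sq ℂ _ _ _ _ (Z x) ((x : H))
    nlinarith [hre x, norm_nonneg (Z x + (x : H)), norm_nonneg ((x : H)), sq_nonneg ‖Z x‖]
  have a2 : ∀ x y : dom, Z x + (x : H) = Z y + (y : H) → x = y := by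
    intro x y h
    have h0 : Z (x - y) + ((x - y : dom) : H) = 0 := by
      have h1 : (Z x + (x : H)) - (Z y + (y : H)) = 0 := sub_eq_zero.mpr h
      rw [map_sub]
      push_cast
      rw [← h1]; abel
    have h2 := a1 (x - y)
    rw [h0, norm_zero] at h2
    have h3 : ((x - y : dom) : H) = 0 := norm_le_zero_iff.mp h2
    have h4 : (x : H) = (y : H) := by
      have h5 : (x : H) - (y : H) = 0 := by push_cast at h3; exact h3
      exact sub_eq_zero.mp h5
    exact Subtype.ext h4
  -- construction of the inverse of `Z + I`
  choose f hf using hsurj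
  have funiq : ∀ (u : H) (x : dom), Z x + (x : H) = u → f u = x := fun u x hx =>
    a2 _ _ (by rw [hf u, hx])
  let flin : H →ₗ[ℂ] dom :=
    { toFun := f
      map_add' := fun u v => funiq (u + v) (f u + f v) (by
        rw [map_add]; push_cast
        conv_rhs => rw [← hf u, ← hf v]
        abel)
      map_smul' := fun c u => funiq (c • u) (c • f u) (by
        rw [map_smul]; push_cast
        conv_rhs => rw [← hf u]
        rw [smul_add]) }
  have fbound : ∀ u : H, ‖flin u‖ ≤ 1 * ‖u‖ := by
    intro u
    have h0 : ‖flin u‖ = ‖((f u : dom) : H)‖ := rfl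
    rw [h0, one_mul]
    calc ‖((f u : dom) : H)‖ ≤ ‖Z (f u) + ((f u : dom) : H)‖ := a1 (f u)
    _ = ‖u‖ := by rw [hf u]
  let R₀ : H →L[ℂ] dom := flin.mkContinuous 1 fbound
  have hR₀ : ∀ u, R₀ u = f u := fun u => rfl
  let R : H →L[ℂ] H := dom.subtypeL.comp R₀
  have hR : ∀ u, R u = ((f u : dom) : H) := fun u => rfl
  have hRnorm : ‖R‖ ≤ 1 := by
    apply ContinuousLinearMap.opNorm_le_bound _ zero_le_one
    intro u
    rw [hR]
    exact fbound u
  have hRx : ∀ x : dom, R (Z x + (x : H)) = (x : H) := by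
    intro x
    rw [hR, funiq _ x rfl]
  -- the Cayley transform
  let Ccan : H →L[ℂ] H := 1 - (2 : ℂ) • R
  have hCapp : ∀ u, Ccan u = u - (2 : ℂ) • R u := fun u => rfl
  have hCx : ∀ x : dom, Ccan (Z x + (x : H)) = Z x - (x : H) := by
    intro x
    rw [hCapp, hRx x, two_smul]
    abel
  have hCnorm : ‖Ccan‖ ≤ 1 := by
    apply ContinuousLinearMap.opNorm_le_bound _ zero_le_one
    intro u
    have h1 : Ccan u = Z (f u) - ((f u : dom) : H) := by
      conv_lhs => rw [← hf u]
      exact hCx (f u)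
    rw [h1, one_mul]
    conv_rhs => rw [← hf u]
    have ha := @norm_add_sq ℂ _ _ _ _ (Z (f u)) ((f u : dom) : H)
    have hs := @norm_sub_sq ℂ _ _ _ _ (Z (f u)) ((f u : dom) : H)
    nlinarith [hre (f u), norm_nonneg (Z (f u) + ((f u : dom) : H)),
      norm_nonneg (Z (f u) - ((f u : dom) : H))]
  have hCuniq : ∀ C' : H →L[ℂ] H,
      (∀ x : dom, C' (Z x + (x : H)) = Z x - (x : H)) → C' = Ccan := by
    intro C' hC'
    ext u
    rw [← hf u, hC' (f u), hCx (f u)]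
  refine ⟨⟨a1, a2, R, hRnorm, hRx⟩, ⟨Ccan, hCx, hCnorm, hCuniq⟩, ?_⟩
  -- part (c)
  intro C hC
  have hCeq : C = Ccan := hCuniq C hC
  subst hCeq
  have hinj : ∀ u : H, R u = 0 → u = 0 := by
    intro u h
    have h' : f u = 0 := by
      have h2 := hR u; rw [h] at h2
      exact_mod_cast h2.symm
    rw [← hf u, h', map_zero]; simp
  have hsplit : ∀ u : H, u = (2⁻¹ : ℂ) • ((Ccan + 1) u) + R u := by
    intro u
    have h1 : (Ccan + 1) u = Ccan u + u := rfl
    rw [h1, hCapp u]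
    module
  constructor
  · -- hard direction: compactness of `C + I` forces `dom = ⊤` and `Z` compact
    intro hK
    -- a uniform lower bound for `R`
    have hlow : ∃ c : ℝ, 0 < c ∧ ∀ u, c * ‖u‖ ≤ ‖R u‖ := by
      by_contra hcon
      push_neg at hcon
      choose g hg using fun n : ℕ => hcon (1 / (n + 1)) (by positivity)
      have hgne : ∀ n, g n ≠ 0 := by
        intro n h
        have h2 := hg n
        rw [h] at h2
        simp at h2
      obtain ⟨Kset, hKc, hKV⟩ := hK
      obtain ⟨ε, hε, hball⟩ := Metric.mem_nhds_iff.mp hKV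
      set r : ℝ := ε / 2 with hrdef
      have hr : 0 < r := by positivity
      set w : ℕ → H := fun n => ((r * ‖g n‖⁻¹ : ℝ) : ℂ) • g n with hwdef
      have hwnorm : ∀ n, ‖w n‖ = r := by
        intro n
        have hgpos : 0 < ‖g n‖ := norm_pos_iff.mpr (hgne n)
        rw [hwdef]
        simp only [norm_smul, Complex.norm_real, Real.norm_eq_abs]
        rw [abs_of_pos (by positivity)]
        field_simp
      have hwV : ∀ n, (Ccan + 1) (w n) ∈ Kset := by
        intro n
        apply hball
        rw [Metric.mem_ball, dist_zero_right, hwnorm n]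
        linarith
      have hwR : ∀ n, ‖R (w n)‖ ≤ r * (1 / (n + 1)) := by
        intro n
        have hgpos : 0 < ‖g n‖ := norm_pos_iff.mpr (hgne n)
        have h2 : R (w n) = ((r * ‖g n‖⁻¹ : ℝ) : ℂ) • R (g n) := by
          rw [hwdef]; exact map_smul R _ _
        rw [h2, norm_smul, Complex.norm_real, Real.norm_eq_abs, abs_of_pos (by positivity)]
        have h3 := (hg n).le
        calc r * ‖g n‖⁻¹ * ‖R (g n)‖ ≤ r * ‖g n‖⁻¹ * (1 / (↑n + 1) * ‖g n‖) := by
              apply mul_le_mul_of_nonneg_left h3 (by positivity)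
        _ = r * (1 / (n + 1)) := by field_simp
      -- extract a convergent subsequence of `(Ccan + 1) (w n)`
      obtain ⟨y, -, φ, hφ, hconv⟩ := hKc.tendsto_subseq hwV
      have hb : Filter.Tendsto (fun n : ℕ => r * (1 / (n + 1))) Filter.atTop (nhds 0) := by
        simpa using tendsto_one_div_add_atTop_nhds_zero_nat.const_mul r
      have t2 : Filter.Tendsto (fun n => R (w (φ n))) Filter.atTop (nhds 0) := by
        rw [tendsto_zero_iff_norm_tendsto_zero]
        apply squeeze_zero (fun n => norm_nonneg _) (fun n => ?_) hb
        calc ‖R (w (φ n))‖ ≤ r * (1 / (φ n + 1)) := hwR (φ n)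
        _ ≤ r * (1 / (n + 1)) := by
              apply mul_le_mul_of_nonneg_left _ hr.le
              apply div_le_div_of_nonneg_left one_pos.le (by positivity)
              · exact_mod_cast Nat.succ_le_succ (hφ.le_apply)
      have t3 : Filter.Tendsto (fun n => w (φ n)) Filter.atTop (nhds ((2⁻¹ : ℂ) • y + 0)) := by
        have h4 := (hconv.const_smul (2⁻¹ : ℂ)).add t2
        convert h4 using 2 with n
        exact hsplit (w (φ n))
      set y' : H := (2⁻¹ : ℂ) • y + 0 with hy'
      have hnormy : ‖y'‖ = r := by
        have hcn := t3.norm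
        simp only [hwnorm] at hcn
        exact (tendsto_nhds_unique tendsto_const_nhds hcn).symm
      have hRy : R y' = 0 :=
        tendsto_nhds_unique ((R.continuous.tendsto y').comp t3) t2
      have h5 : y' = 0 := hinj y' hRy
      rw [h5, norm_zero] at hnormy
      exact absurd hnormy.symm hr.ne'
    obtain ⟨c, hc, hcb⟩ := hlow
    -- `R` has closed range, hence `dom` is closed
    have hanti : AntilipschitzWith (⟨c, hc.le⟩ : NNReal)⁻¹ ⇑R := by
      apply R.antilipschitz_of_bound
      intro x
      have h := hcb x
      change ‖x‖ ≤ c⁻¹ * ‖R x‖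
      rw [← div_eq_inv_mul, le_div_iff₀ hc]
      linarith
    have hclosed : IsClosed (Set.range ⇑R) := hanti.isClosed_range R.uniformContinuous
    have hrange : Set.range ⇑R = (dom : Set H) := by
      ext x
      constructor
      · rintro ⟨u, rfl⟩
        rw [hR u]
        exact SetLike.coe_mem _
      · intro hx
        exact ⟨Z ⟨x, hx⟩ + x, hRx ⟨x, hx⟩⟩
    have hdomclosed : IsClosed (dom : Set H) := hrange ▸ hclosed
    haveI : CompleteSpace dom := hdomclosed.completeSpace_coe
    -- `dom` is dense: its orthogonal complement is trivial
    have hbot : domᗮ = ⊥ := by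
      rw [Submodule.eq_bot_iff]
      intro v hv
      have h1 : ∀ u : H, (inner ℂ (R u) v : ℂ) = 0 := by
        intro u
        exact (Submodule.mem_orthogonal dom v).mp hv (R u) (by rw [hR u]; exact SetLike.coe_mem _)
      have h2 : ∀ u : H, (inner ℂ u ((ContinuousLinearMap.adjoint Ccan) v) : ℂ) = inner ℂ u v := by
        intro u
        rw [ContinuousLinearMap.adjoint_inner_right, hCapp u]
        rw [inner_sub_left, inner_smul_left, h1 u]
        simp
      have h3 : (ContinuousLinearMap.adjoint Ccan) v = v := ext_inner_left ℂ h2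
      have hadj : ‖ContinuousLinearMap.adjoint Ccan‖ ≤ 1 := by
        rw [LinearIsometryEquiv.norm_map ContinuousLinearMap.adjoint Ccan]; exact hCnorm
      have h4 : Ccan v = v := by
        have h5 := fix_of_contraction' (ContinuousLinearMap.adjoint Ccan) hadj h3
        rwa [ContinuousLinearMap.adjoint_adjoint] at h5
      have h5 : R v = 0 := by
        rw [hCapp v] at h4
        have h6 : (2 : ℂ) • R v = 0 := sub_eq_self.mp h4
        have h7 := smul_eq_zero.mp h6
        simpa using h7
      exact hinj v h5
    have hdomtop : dom = ⊤ := Submodule.orthogonal_eq_bot_iff.mp hbot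
    refine ⟨hdomtop, ?_⟩
    -- `Z` is compact: `Z = 2⁻¹ (Ccan + 1) (Z + I)` with `Z + I` bounded
    have hbnd : ∀ x : dom, ‖(Z + dom.subtype) x‖ ≤ c⁻¹ * ‖x‖ := by
      intro x
      have h1 : (Z + dom.subtype) x = Z x + (x : H) := rfl
      have h2 := hcb (Z x + (x : H))
      rw [hRx x] at h2
      rw [h1, ← div_eq_inv_mul, le_div_iff₀ hc]
      have hnx : ‖x‖ = ‖(x : H)‖ := rfl
      rw [hnx]
      linarith
    let T : dom →L[ℂ] H := (Z + dom.subtype).mkContinuous c⁻¹ hbnd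
    have heq : (fun x : dom => Z x) = (fun wv : H => (2⁻¹ : ℂ) • wv) ∘ ⇑(Ccan + 1) ∘ ⇑T := by
      funext x
      show Z x = (2⁻¹ : ℂ) • ((Ccan + 1) (T x))
      have hT : T x = Z x + (x : H) := rfl
      have h1 : (Ccan + 1) (Z x + (x : H)) = Ccan (Z x + (x : H)) + (Z x + (x : H)) := rfl
      rw [hT, h1, hCx x]
      module
    rw [heq]
    exact (hK.comp_clm T).continuous_comp (continuous_const_smul _)
  · -- easy direction
    rintro ⟨hdom, hZc⟩
    have heq2 : ⇑(Ccan + 1) = (fun wv : H => (2 : ℂ) • wv) ∘ (fun x : dom => Z x) ∘ ⇑R₀ := by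
      funext u
      show (Ccan + 1) u = (2 : ℂ) • Z (R₀ u)
      have h1 : (Ccan + 1) u = Ccan u + u := rfl
      have key : Ccan u + u = (2 : ℂ) • Z (f u) := by
        conv_lhs => rw [(hf u).symm]
        rw [hCx (f u)]
        module
      rw [h1, hR₀ u]
      exact key
    rw [heq2]
    exact (hZc.comp_clm R₀).continuous_comp (continuous_const_smul _)
end

section
/- Let A be a closed, densely defined, symmetric operator in a complex Hilbert space X, let (H, Γ₀, Γ₁) be a boundary triple for its adjoint A*, let Z be a densely defined accretive operator in H, and let A_Z be the restriction of A* to dom A_Z = {y ∈ dom A* : Γ₀ y ∈ dom Z and Z Γ₀ y = i Γ₁ y}. Then A_Z is self-adjoint (A_Z coincides with its adjoint) if and only if the Hilbert-space adjoint Z* of Z satisfies Z* = −Z. -/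
/-- An operator in a complex Hilbert space `H` is accretive if `Re ⟪Z h, h⟫ ≥ 0` on its
domain (the real part is the same in both inner-product conventions). -/
def LinearPMap.Accretive {H : Type*} [NormedAddCommGroup H] [InnerProductSpace ℂ H]
    (Z : H →ₗ.[ℂ] H) : Prop :=
  ∀ h : Z.domain, 0 ≤ (inner ℂ (h : H) (Z h) : ℂ).re

local notation "⟪" x ", " y "⟫" => @inner ℂ _ _ x y

/-- Let `A` be a closed, densely defined, symmetric operator in a complex
Hilbert space `X`, let `(H, Γ₀, Γ₁)` be a boundary triple for `A*`, let `Z` be a densely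
defined accretive operator in `H`, and let `A_Z` (here `B`) be the restriction of `A*` to
`{y ∈ dom A* : Γ₀ y ∈ dom Z ∧ Z Γ₀ y = i Γ₁ y}`.  Then `A_Z` is self-adjoint if and only if
the Hilbert-space adjoint `Z*` of `Z` satisfies `Z* = -Z`. -/
theorem stmt_9 {X H : Type*} [NormedAddCommGroup X] [InnerProductSpace ℂ X] [CompleteSpace X]
    [NormedAddCommGroup H] [InnerProductSpace ℂ H] [CompleteSpace H]
    (A : X →ₗ.[ℂ] X)
    (hdense : Dense (A.domain : Set X))
    (hsym : ∀ f g : A.domain, (inner ℂ (A f) (g : X) : ℂ) = (inner ℂ (f : X) (A g) : ℂ))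
    (hclosed : IsClosed (A.graph : Set (X × X)))
    (Γ₀ Γ₁ : A.adjoint.domain →ₗ[ℂ] H)
    (hsurj : ∀ h₀ h₁ : H, ∃ f : A.adjoint.domain, Γ₀ f = h₀ ∧ Γ₁ f = h₁)
    (hGreen : ∀ f g : A.adjoint.domain,
      (inner ℂ (A.adjoint f) (g : X) : ℂ) - (inner ℂ (f : X) (A.adjoint g) : ℂ)
        = (inner ℂ (Γ₁ f) (Γ₀ g) : ℂ) - (inner ℂ (Γ₀ f) (Γ₁ g) : ℂ))
    (Z : H →ₗ.[ℂ] H) (hZ : Z.Accretive) (hZdense : Dense (Z.domain : Set H))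
    (B : X →ₗ.[ℂ] X)
    (hB : ∀ x y : X, (x, y) ∈ B.graph ↔
      ∃ f : A.adjoint.domain, (f : X) = x ∧ A.adjoint f = y ∧
        ∃ hf : Γ₀ f ∈ Z.domain, Z ⟨Γ₀ f, hf⟩ = Complex.I • Γ₁ f) :
    B.adjoint = B ↔ Z.adjoint = -Z := by
  classical
  have hFA : A.IsFormalAdjoint A := fun f g => hsym f g
  have hAle : A ≤ A.adjoint := hFA.le_adjoint hdense
  have hAFA : A.adjoint.IsFormalAdjoint A := LinearPMap.adjoint_isFormalAdjoint hdense
  have hZFA : Z.adjoint.IsFormalAdjoint Z := LinearPMap.adjoint_isFormalAdjoint hZdense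
  -- swap lemmas obtained by conjugating the formal-adjoint identities
  have hswap : ∀ (g : A.adjoint.domain) (f : A.domain),
      ⟪(f : X), A.adjoint g⟫ = ⟪A f, (g : X)⟫ := by
    intro g f
    have h := congrArg (starRingEnd ℂ) (hAFA g f)
    simpa only [inner_conj_symm] using h
  have hZswap : ∀ (v : Z.adjoint.domain) (h : Z.domain),
      ⟪(h : H), Z.adjoint v⟫ = ⟪Z h, (v : H)⟫ := by
    intro v h
    have h' := congrArg (starRingEnd ℂ) (hZFA v h)
    simpa only [inner_conj_symm] using h'
  -- the inclusion of `dom A` into `dom A†`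
  have hmemA : ∀ f : A.domain, (f : X) ∈ A.adjoint.domain := fun f => hAle.1 f.2
  have hιval : ∀ f : A.domain,
      A.adjoint ⟨(f : X), hmemA f⟩ = A f := by
    intro f
    exact (hAle.2 (x := f) (y := ⟨(f : X), hmemA f⟩) rfl).symm
  -- boundary maps vanish on `dom A`
  have hbd0 : ∀ f : A.domain,
      Γ₀ (⟨(f : X), hmemA f⟩ : A.adjoint.domain) = 0 ∧
      Γ₁ (⟨(f : X), hmemA f⟩ : A.adjoint.domain) = 0 := by
    intro f
    have key : ∀ g : A.adjoint.domain,
        ⟪Γ₁ (⟨(f : X), hmemA f⟩ : A.adjoint.domain), Γ₀ g⟫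
          - ⟪Γ₀ (⟨(f : X), hmemA f⟩ : A.adjoint.domain), Γ₁ g⟫ = 0 := by
      intro g
      rw [← hGreen ⟨(f : X), hmemA f⟩ g, hιval f]
      have h2 : ((⟨(f : X), hmemA f⟩ : A.adjoint.domain) : X) = (f : X) := rfl
      rw [h2, hswap g f, sub_self]
    constructor
    · obtain ⟨g, hg0, hg1⟩ := hsurj 0 (Γ₀ (⟨(f : X), hmemA f⟩ : A.adjoint.domain))
      have hk := key g
      rw [hg0, hg1, inner_zero_right, zero_sub, neg_eq_zero] at hk
      exact inner_self_eq_zero.mp hk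
    · obtain ⟨g, hg0, hg1⟩ := hsurj (Γ₁ (⟨(f : X), hmemA f⟩ : A.adjoint.domain)) 0
      have hk := key g
      rw [hg0, hg1, inner_zero_right, sub_zero] at hk
      exact inner_self_eq_zero.mp hk
  -- `dom A ⊆ dom B` at the level of graphs
  have hABgraph : ∀ f : A.domain, ((f : X), A f) ∈ B.graph := by
    intro f
    have h0 : Γ₀ (⟨(f : X), hmemA f⟩ : A.adjoint.domain) ∈ Z.domain := by
      rw [(hbd0 f).1]; exact Z.domain.zero_mem
    refine (hB _ _).2 ⟨⟨(f : X), hmemA f⟩, rfl, hιval f, h0, ?_⟩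
    have he : (⟨Γ₀ (⟨(f : X), hmemA f⟩ : A.adjoint.domain), h0⟩ : Z.domain) = 0 :=
      Subtype.ext (hbd0 f).1
    rw [he, Z.map_zero, (hbd0 f).2, smul_zero]
  have hBdense : Dense (B.domain : Set X) := by
    have hsub : (A.domain : Set X) ⊆ (B.domain : Set X) := by
      intro x hx
      obtain ⟨u, hu1, _⟩ := B.mem_graph_iff.1 (hABgraph ⟨x, hx⟩)
      have h2 : x = (u : X) := hu1.symm
      rw [h2]
      exact u.2
    exact hdense.mono hsub
  have hBFA : B.adjoint.IsFormalAdjoint B := LinearPMap.adjoint_isFormalAdjoint hBdense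
  have hBmem : ∀ u : B.domain, ∃ f : A.adjoint.domain, (f : X) = (u : X) ∧
      A.adjoint f = B u ∧
      ∃ hf : Γ₀ f ∈ Z.domain, Z ⟨Γ₀ f, hf⟩ = Complex.I • Γ₁ f :=
    fun u => (hB _ _).1 (B.mem_graph u)
  have hmemB : ∀ (f : A.adjoint.domain) (hf : Γ₀ f ∈ Z.domain),
      Z ⟨Γ₀ f, hf⟩ = Complex.I • Γ₁ f →
      ∃ u : B.domain, (u : X) = (f : X) ∧ B u = A.adjoint f := by
    intro f hf hZf
    obtain ⟨u, hu1, hu2⟩ := B.mem_graph_iff.1 ((hB _ _).2 ⟨f, rfl, rfl, hf, hZf⟩)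
    exact ⟨u, hu1, hu2⟩
  -- adjoint of Z from the pairing identity
  have hZadj : ∀ (v w : H), (∀ h : Z.domain, ⟪Z h, v⟫ = ⟪(h : H), w⟫) →
      ∃ hv : v ∈ Z.adjoint.domain, Z.adjoint ⟨v, hv⟩ = w := by
    intro v w hw
    have hw' : ∀ h : Z.domain, ⟪w, (h : H)⟫ = ⟪v, Z h⟫ := by
      intro h
      have h' := congrArg (starRingEnd ℂ) (hw h)
      simpa only [inner_conj_symm] using h'.symm
    have hv : v ∈ Z.adjoint.domain := LinearPMap.mem_adjoint_domain_of_exists v ⟨w, hw'⟩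
    exact ⟨hv, LinearPMap.adjoint_apply_eq hZdense ⟨v, hv⟩ hw'⟩
  -- THE characterization of the graph of `B†`
  have hBadjGraph : ∀ x y : X, (x, y) ∈ B.adjoint.graph ↔
      ∃ g : A.adjoint.domain, (g : X) = x ∧ A.adjoint g = y ∧
        ∃ hg : Γ₀ g ∈ Z.adjoint.domain,
          Z.adjoint ⟨Γ₀ g, hg⟩ = -(Complex.I • Γ₁ g) := by
    intro x y
    constructor
    · intro hxy
      obtain ⟨u, hu1, hu2⟩ := B.adjoint.mem_graph_iff.1 hxy
      have hu1' : (u : X) = x := hu1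
      have hu2' : B.adjoint u = y := hu2
      have hpair : ∀ w : B.domain, ⟪y, (w : X)⟫ = ⟪x, B w⟫ := by
        intro w
        rw [← hu1', ← hu2']
        exact hBFA u w
      have hpairA : ∀ f : A.domain, ⟪y, (f : X)⟫ = ⟪x, A f⟫ := by
        intro f
        obtain ⟨w, hw1, hw2⟩ := B.mem_graph_iff.1 (hABgraph f)
        have hp := hpair w
        rw [hw1, hw2] at hp
        exact hp
      have hxmem : x ∈ A.adjoint.domain :=
        LinearPMap.mem_adjoint_domain_of_exists x ⟨y, hpairA⟩
      have hgy : A.adjoint ⟨x, hxmem⟩ = y :=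
        LinearPMap.adjoint_apply_eq hdense ⟨x, hxmem⟩ hpairA
      have hbdry : ∀ h : Z.domain,
          ⟪Z h, Γ₀ (⟨x, hxmem⟩ : A.adjoint.domain)⟫
            = ⟪(h : H), -(Complex.I • Γ₁ (⟨x, hxmem⟩ : A.adjoint.domain))⟫ := by
        intro h
        obtain ⟨f, hf0, hf1⟩ := hsurj (h : H) (-(Complex.I • Z h))
        have hf : Γ₀ f ∈ Z.domain := by rw [hf0]; exact h.2
        have hZf : Z ⟨Γ₀ f, hf⟩ = Complex.I • Γ₁ f := by
          have he : (⟨Γ₀ f, hf⟩ : Z.domain) = h := Subtype.ext hf0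
          rw [he, hf1, smul_neg, smul_smul, Complex.I_mul_I, neg_one_smul, neg_neg]
        obtain ⟨w, hw1, hw2⟩ := hmemB f hf hZf
        have hL : ⟪A.adjoint f, x⟫ = ⟪(f : X), y⟫ := by
          have h1 := hpair w
          have h2 := congrArg (starRingEnd ℂ) h1
          simp only [inner_conj_symm] at h2
          rw [hw1, hw2] at h2
          exact h2.symm
        have hgreen := hGreen f ⟨x, hxmem⟩
        have hcx : ((⟨x, hxmem⟩ : A.adjoint.domain) : X) = x := rfl
        rw [hcx, hgy, hL, sub_self] at hgreen
        have E : ⟪Γ₁ f, Γ₀ (⟨x, hxmem⟩ : A.adjoint.domain)⟫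
            = ⟪Γ₀ f, Γ₁ (⟨x, hxmem⟩ : A.adjoint.domain)⟫ := (sub_eq_zero.mp hgreen.symm)
        rw [hf0, hf1] at E
        simp only [inner_neg_left, inner_smul_left, Complex.conj_I] at E
        simp only [inner_neg_right, inner_smul_right]
        linear_combination (-Complex.I) * E
          + ⟪Z h, Γ₀ (⟨x, hxmem⟩ : A.adjoint.domain)⟫ * Complex.I_mul_I
      obtain ⟨hv, hval⟩ := hZadj _ _ hbdry
      exact ⟨⟨x, hxmem⟩, rfl, hgy, hv, hval⟩
    · rintro ⟨g, rfl, rfl, hg, hZg⟩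
      have hkey : ∀ w : B.domain, ⟪A.adjoint g, (w : X)⟫ = ⟪(g : X), B w⟫ := by
        intro w
        obtain ⟨f, hf1, hf2, hf, hZf⟩ := hBmem w
        have hf1' : Γ₁ f = -(Complex.I • Z ⟨Γ₀ f, hf⟩) := by
          rw [hZf, smul_smul, Complex.I_mul_I, neg_one_smul, neg_neg]
        have hZs := (hZswap ⟨Γ₀ g, hg⟩ ⟨Γ₀ f, hf⟩).symm
        rw [hZg] at hZs
        have hcf : ((⟨Γ₀ f, hf⟩ : Z.domain) : H) = Γ₀ f := rfl
        rw [hcf] at hZs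
        -- hZs : ⟪Z ⟨Γ₀ f, hf⟩, Γ₀ g⟫ = ⟪Γ₀ f, -(I • Γ₁ g)⟫
        have hbz : ⟪Γ₁ f, Γ₀ g⟫ - ⟪Γ₀ f, Γ₁ g⟫ = 0 := by
          rw [hf1']
          simp only [inner_neg_left, inner_smul_left, Complex.conj_I,
            inner_neg_right, inner_smul_right] at hZs ⊢
          linear_combination Complex.I * hZs - ⟪Γ₀ f, Γ₁ g⟫ * Complex.I_mul_I
        have hgreen := hGreen f g
        rw [hbz] at hgreen
        have h0 : ⟪A.adjoint f, (g : X)⟫ = ⟪(f : X), A.adjoint g⟫ := sub_eq_zero.mp hgreen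
        have h1 := congrArg (starRingEnd ℂ) h0
        simp only [inner_conj_symm] at h1
        rw [hf2, hf1] at h1
        exact h1.symm
      have hgmem : (g : X) ∈ B.adjoint.domain :=
        LinearPMap.mem_adjoint_domain_of_exists _ ⟨A.adjoint g, hkey⟩
      have hval : B.adjoint ⟨(g : X), hgmem⟩ = A.adjoint g :=
        LinearPMap.adjoint_apply_eq hBdense ⟨(g : X), hgmem⟩ hkey
      have hmg := B.adjoint.mem_graph ⟨(g : X), hgmem⟩
      rw [hval] at hmg
      exact hmg
  constructor
  · -- B† = B → Z† = -Z
    intro hBeq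
    have hforward : ∀ v : Z.domain, ∃ hv : (v : H) ∈ Z.adjoint.domain,
        Z.adjoint ⟨(v : H), hv⟩ = -(Z v) := by
      intro v
      obtain ⟨f, hf0, hf1⟩ := hsurj (v : H) (-(Complex.I • Z v))
      have hf : Γ₀ f ∈ Z.domain := by rw [hf0]; exact v.2
      have hZf : Z ⟨Γ₀ f, hf⟩ = Complex.I • Γ₁ f := by
        have he : (⟨Γ₀ f, hf⟩ : Z.domain) = v := Subtype.ext hf0
        rw [he, hf1, smul_neg, smul_smul, Complex.I_mul_I, neg_one_smul, neg_neg]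
      have hmem : ((f : X), A.adjoint f) ∈ B.adjoint.graph := by
        rw [hBeq]; exact (hB _ _).2 ⟨f, rfl, rfl, hf, hZf⟩
      obtain ⟨g, hg1, hg2, hg, hZg⟩ := (hBadjGraph _ _).1 hmem
      have hgf : g = f := Subtype.ext hg1
      have hg' : Γ₀ f ∈ Z.adjoint.domain := by rw [← hgf]; exact hg
      have hxe : (⟨Γ₀ f, hg'⟩ : Z.adjoint.domain) = ⟨Γ₀ g, hg⟩ :=
        Subtype.ext (congrArg (fun t => Γ₀ t) hgf).symm
      have hZg' : Z.adjoint ⟨Γ₀ f, hg'⟩ = -(Complex.I • Γ₁ f) := by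
        rw [hxe, hZg, hgf]
      have hv : (v : H) ∈ Z.adjoint.domain := by rw [← hf0]; exact hg'
      refine ⟨hv, ?_⟩
      have he : (⟨(v : H), hv⟩ : Z.adjoint.domain) = ⟨Γ₀ f, hg'⟩ := Subtype.ext hf0.symm
      rw [he, hZg', hf1, smul_neg, neg_neg, smul_smul, Complex.I_mul_I, neg_one_smul]
    have hbackward : ∀ v : Z.adjoint.domain, ∃ hv : (v : H) ∈ Z.domain,
        Z ⟨(v : H), hv⟩ = -(Z.adjoint v) := by
      intro v
      obtain ⟨f, hf0, hf1⟩ := hsurj (v : H) (Complex.I • Z.adjoint v)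
      have hg : Γ₀ f ∈ Z.adjoint.domain := by rw [hf0]; exact v.2
      have hZg : Z.adjoint ⟨Γ₀ f, hg⟩ = -(Complex.I • Γ₁ f) := by
        have he : (⟨Γ₀ f, hg⟩ : Z.adjoint.domain) = v := Subtype.ext hf0
        rw [he, hf1, smul_smul, Complex.I_mul_I, neg_one_smul, neg_neg]
      have hmem : ((f : X), A.adjoint f) ∈ B.graph := by
        rw [← hBeq]; exact (hBadjGraph _ _).2 ⟨f, rfl, rfl, hg, hZg⟩
      obtain ⟨g, hg1, hg2, hf, hZf⟩ := (hB _ _).1 hmem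
      have hgf : g = f := Subtype.ext hg1
      have hf' : Γ₀ f ∈ Z.domain := by rw [← hgf]; exact hf
      have hxe : (⟨Γ₀ f, hf'⟩ : Z.domain) = ⟨Γ₀ g, hf⟩ :=
        Subtype.ext (congrArg (fun t => Γ₀ t) hgf).symm
      have hZf' : Z ⟨Γ₀ f, hf'⟩ = Complex.I • Γ₁ f := by
        rw [hxe, hZf, hgf]
      have hv : (v : H) ∈ Z.domain := by rw [← hf0]; exact hf'
      refine ⟨hv, ?_⟩
      have he : (⟨(v : H), hv⟩ : Z.domain) = ⟨Γ₀ f, hf'⟩ := Subtype.ext hf0.symm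
      rw [he, hZf', hf1, smul_smul, Complex.I_mul_I, neg_one_smul]
    have hdomeq : Z.adjoint.domain = (-Z).domain := by
      rw [LinearPMap.neg_domain]
      apply le_antisymm
      · intro v hv
        exact (hbackward ⟨v, hv⟩).1
      · intro v hv
        exact (hforward ⟨v, hv⟩).1
    refine LinearPMap.ext hdomeq ?_
    intro xv yv hxy
    rw [LinearPMap.neg_apply]
    obtain ⟨hv, hval⟩ := hforward ⟨xv, hxy⟩
    exact hval
  · -- Z† = -Z → B† = B
    intro hZeq
    have hdomeq : Z.adjoint.domain = Z.domain := by rw [hZeq]; exact Z.neg_domain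
    obtain ⟨hd, hfun⟩ := LinearPMap.ext_iff.1 hZeq
    apply LinearPMap.eq_of_eq_graph
    ext ⟨x, y⟩
    rw [hBadjGraph x y, hB x y]
    constructor
    · rintro ⟨g, rfl, rfl, hg, hZg⟩
      have hg' : Γ₀ g ∈ Z.domain := by rw [← hdomeq]; exact hg
      refine ⟨g, rfl, rfl, hg', ?_⟩
      have h1 := @hfun (Γ₀ g) hg hg'
      rw [LinearPMap.neg_apply] at h1
      have h2 : -(Complex.I • Γ₁ g) = -(Z ⟨Γ₀ g, hg'⟩) := by rw [← hZg]; exact h1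
      exact (neg_inj.mp h2).symm
    · rintro ⟨f, rfl, rfl, hf, hZf⟩
      have hf' : Γ₀ f ∈ Z.adjoint.domain := by rw [hdomeq]; exact hf
      refine ⟨f, rfl, rfl, hf', ?_⟩
      have h1 := @hfun (Γ₀ f) hf' hf
      rw [LinearPMap.neg_apply] at h1
      rw [h1, hZf]
end
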